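/- Let L_1,...,L_M ∈ Z[X_1,...,X_N] be non-zero linear forms, each with relatively prime coefficients, where N ≥ 2. Then there exists x ∈ Z^N with L_i(x) ≠ 0 for every i = 1,...,M and max_j |x_j| ≤ Σ_{i=1}^M 1/H(L_i) + √M. -/

import Mathlib

open Finset

namespace S15


noncomputable def box (N K : ℕ) : Finset (Fin N → ℤ) :=
  Fintype.piFinset fun _ => Finset.Icc (-(K:ℤ)) (K:ℤ)


lemma card_box (N K : ℕ) : (box N K).card = (2*K+1)^N := by
  simp only [box, Fintype.card_piFinset, Int.card_Icc]
  have : ((K:ℤ) + 1 + K).toNat = 2*K+1 := by omega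
  simp [this]


lemma mem_box {N K : ℕ} {x : Fin N → ℤ} :
    x ∈ box N K ↔ ∀ j, x j ∈ Finset.Icc (-(K:ℤ)) (K:ℤ) := by
  simp [box, Fintype.mem_piFinset]


lemma ap_card {K : ℕ} {d : ℤ} (hd : 0 < d) {S : Finset ℤ}
    (hS : S ⊆ Finset.Icc (-(K:ℤ)) K) (h : ∀ u ∈ S, ∀ v ∈ S, d ∣ u - v) :
    S.card ≤ 2*K / d.toNat + 1 := by
  rcases S.eq_empty_or_nonempty with rfl | hne
  · simp
  · have hmin := S.min'_mem hne
    set v₀ := S.min' hne with hv₀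
    have hcard := Finset.card_le_card_of_injOn (s := S) (f := fun v => ((v - v₀)/d).toNat)
      (t := Finset.range (2*K / d.toNat + 1)) ?_ ?_
    · exact le_trans hcard (by simp)
    · intro v hv
      have h1 : d ∣ v - v₀ := h v hv v₀ hmin
      have h2 : 0 ≤ v - v₀ := by
        have := S.min'_le v hv
        omega
      have h3 : v - v₀ ≤ 2*K := by
        have l1 := (Finset.mem_Icc.mp (hS hv)).2
        have l2 := (Finset.mem_Icc.mp (hS hmin)).1
        omega
      have h4 : (v - v₀)/d ≤ (2*K : ℤ)/d := Int.ediv_le_ediv hd h3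
      have h5 : ((2*K : ℤ))/d = (2*K / d.toNat : ℕ) := by
        conv_lhs => rw [show d = ((d.toNat : ℕ) : ℤ) from (Int.toNat_of_nonneg hd.le).symm]
        rw [show (2*((K:ℕ):ℤ)) = ((2*K:ℕ):ℤ) by push_cast; ring]
        exact (Int.natCast_ediv _ _).symm
      simp only [Finset.mem_coe, Finset.mem_range]
      have h6 : 0 ≤ (v - v₀)/d := Int.ediv_nonneg h2 hd.le
      omega
    · intro u hu v hv heq
      have h1 : d ∣ u - v₀ := h u hu v₀ hmin
      have h2 : d ∣ v - v₀ := h v hv v₀ hmin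
      have h3 : 0 ≤ u - v₀ := by have := S.min'_le u hu; omega
      have h4 : 0 ≤ v - v₀ := by have := S.min'_le v hv; omega
      have e8 : ((u - v₀)/d).toNat = ((v - v₀)/d).toNat := heq
      have h5 : (u - v₀)/d = (v - v₀)/d := by
        have e6 : 0 ≤ (u - v₀)/d := Int.ediv_nonneg h3 hd.le
        have e7 : 0 ≤ (v - v₀)/d := Int.ediv_nonneg h4 hd.le
        omega
      have := Int.ediv_mul_cancel h1
      have := Int.ediv_mul_cancel h2
      have : u - v₀ = v - v₀ := by
        rw [← Int.ediv_mul_cancel h1, ← Int.ediv_mul_cancel h2, h5]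
      omega


lemma div_count {K g' : ℕ} (hg' : 0 < g') (a c : ℤ) :
    ((Finset.Icc (-(K:ℤ)) K).filter fun v => (g':ℤ) ∣ c + a * v).card * g'
      ≤ 2*K*(Int.gcd a (g':ℤ)) + g' := by
  set g : ℕ := Int.gcd a (g':ℤ) with hg
  have hgpos : 0 < g := Int.gcd_pos_of_ne_zero_right _ (by exact_mod_cast hg'.ne')
  have hdvd : ((g:ℕ):ℤ) ∣ ((g':ℕ):ℤ) := Int.gcd_dvd_right _ _
  have hgN : g ∣ g' := by exact_mod_cast hdvd
  set e : ℕ := g' / g with he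
  have hge : g * e = g' := Nat.mul_div_cancel' hgN
  have hepos : 0 < e := by
    rcases Nat.eq_zero_or_pos e with h0 | h
    · rw [h0, Nat.mul_zero] at hge; omega
    · exact h
  set a' : ℤ := a / (g:ℤ) with ha'def
  have ha' : (g:ℤ) * a' = a := Int.mul_ediv_cancel' (Int.gcd_dvd_left _ _)
  have hcop : Int.gcd a' (e:ℤ) = 1 := by
    have := Int.gcd_div_gcd_div_gcd (i := a) (j := (g':ℤ)) hgpos
    have heZ : ((g':ℕ):ℤ) / ((g:ℕ):ℤ) = (e:ℤ) := by
      rw [← hge]; push_cast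
      rw [mul_comm]
      exact Int.mul_ediv_cancel _ (by exact_mod_cast hgpos.ne')
    rwa [← hg, heZ] at this
  have key : ∀ u ∈ (Finset.Icc (-(K:ℤ)) K).filter fun v => (g':ℤ) ∣ c + a * v,
      ∀ v ∈ (Finset.Icc (-(K:ℤ)) K).filter fun v => (g':ℤ) ∣ c + a * v,
      (e:ℤ) ∣ u - v := by
    intro u hu v hv
    have h1 : (g':ℤ) ∣ c + a * u := (Finset.mem_filter.mp hu).2
    have h2 : (g':ℤ) ∣ c + a * v := (Finset.mem_filter.mp hv).2
    have h3 : (g':ℤ) ∣ a * (u - v) := by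
      have := dvd_sub h1 h2
      have heq : (c + a*u) - (c + a*v) = a * (u - v) := by ring
      rwa [heq] at this
    have h4 : (g:ℤ) * (e:ℤ) ∣ (g:ℤ) * (a' * (u - v)) := by
      have : ((g':ℕ):ℤ) = (g:ℤ) * (e:ℤ) := by exact_mod_cast hge.symm
      rw [← this]
      rw [← mul_assoc, ha']
      exact h3
    have h5 : (e:ℤ) ∣ a' * (u - v) :=
      (mul_dvd_mul_iff_left (by exact_mod_cast hgpos.ne' : (g:ℤ) ≠ 0)).mp h4
    have h6 : IsCoprime (e:ℤ) a' := by
      rw [Int.isCoprime_iff_gcd_eq_one, Int.gcd_comm]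
      exact hcop
    exact h6.dvd_of_dvd_mul_left h5
  have hcc := ap_card (d := (e:ℤ)) (by exact_mod_cast hepos) (Finset.filter_subset _ _) key
  have htn : ((e:ℤ)).toNat = e := Int.toNat_natCast e
  rw [htn] at hcc
  calc ((Finset.Icc (-(K:ℤ)) K).filter fun v => (g':ℤ) ∣ c + a * v).card * g'
      ≤ (2*K/e + 1) * g' := Nat.mul_le_mul_right _ hcc
    _ = g * ((2*K/e) * e) + g' := by rw [← hge]; ring
    _ ≤ g * (2*K) + g' := by
        have := Nat.div_mul_le_self (2*K) e
        exact Nat.add_le_add_right (Nat.mul_le_mul_left _ this) _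
    _ = 2*K*g + g' := by ring


noncomputable def Fse (N K m : ℕ) (a : Fin N → ℤ) (s : Finset (Fin N)) (c : ℤ) : Finset (Fin N → ℤ) :=
  (box N K).filter fun y => (∀ j, j ∉ s → y j = 0) ∧ (m:ℤ) ∣ c + ∑ j ∈ s, a j * y j


lemma card_insert_sum {N : ℕ} (K m : ℕ) (a : Fin N → ℤ) {s : Finset (Fin N)} {j : Fin N}
    (hj : j ∉ s) (c : ℤ) :
    (Fse N K m a (insert j s) c).card
      = ∑ v ∈ Finset.Icc (-(K:ℤ)) K, (Fse N K m a s (c + a j * v)).card := by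
  rw [Finset.card_eq_sum_card_fiberwise (f := fun y => y j)
    (t := Finset.Icc (-(K:ℤ)) K) (fun y hy => by
      have := (Finset.mem_filter.mp hy).1
      exact mem_box.mp this j)]
  refine Finset.sum_congr rfl fun v hv => ?_
  refine Finset.card_bij' (fun y _ => Function.update y j 0)
    (fun z _ => Function.update z j v) ?_ ?_ ?_ ?_
  · -- maps into
    intro y hy
    simp only [Finset.mem_filter, Fse] at hy ⊢
    obtain ⟨⟨hbox, hzero, hdvd⟩, hyj⟩ := hy
    refine ⟨?_, ?_, ?_⟩
    · rw [mem_box] at hbox ⊢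
      intro k
      by_cases hk : k = j
      · subst hk; simp
      · rw [Function.update_of_ne hk]; exact hbox k
    · intro k hk
      by_cases hkj : k = j
      · subst hkj; simp
      · rw [Function.update_of_ne hkj]
        exact hzero k (by simp [hkj, hk])
    · have hsum : ∑ k ∈ s, a k * (Function.update y j 0) k = ∑ k ∈ s, a k * y k :=
        Finset.sum_congr rfl fun k hk => by
          rw [Function.update_of_ne (ne_of_mem_of_not_mem hk hj)]
      rw [hsum]
      have : c + a j * v + ∑ k ∈ s, a k * y k = c + ∑ k ∈ insert j s, a k * y k := by
        rw [Finset.sum_insert hj, hyj]; ring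
      rw [this]; exact hdvd
  · -- inverse maps into
    intro z hz
    simp only [Finset.mem_filter, Fse] at hz ⊢
    obtain ⟨hbox, hzero, hdvd⟩ := hz
    refine ⟨⟨?_, ?_, ?_⟩, ?_⟩
    · rw [mem_box] at hbox ⊢
      intro k
      by_cases hk : k = j
      · subst hk; simp only [Function.update_self]; exact hv
      · rw [Function.update_of_ne hk]; exact hbox k
    · intro k hk
      simp only [Finset.mem_insert, not_or] at hk
      rw [Function.update_of_ne hk.1]
      exact hzero k hk.2
    · have hsum : ∑ k ∈ s, a k * (Function.update z j v) k = ∑ k ∈ s, a k * z k :=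
        Finset.sum_congr rfl fun k hk => by
          rw [Function.update_of_ne (ne_of_mem_of_not_mem hk hj)]
      rw [Finset.sum_insert hj, Function.update_self, hsum]
      have : c + (a j * v + ∑ k ∈ s, a k * z k) = c + a j * v + ∑ k ∈ s, a k * z k := by ring
      rw [this]; exact hdvd
    · simp
  · -- left inverse
    intro y hy
    simp only [Finset.mem_filter] at hy
    funext k
    by_cases hk : k = j
    · subst hk; simp [hy.2]
    · simp [Function.update_of_ne hk]
  · -- right inverse
    intro z hz
    simp only [Finset.mem_filter, Fse] at hz
    funext k
    by_cases hk : k = j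
    · subst hk
      simp [hz.2.1 k hj]
    · simp [Function.update_of_ne hk]


lemma Fse_card_eq_zero {N : ℕ} (K m : ℕ) (a : Fin N → ℤ) (s : Finset (Fin N)) (c : ℤ)
    (h : ¬ ((Int.gcd (m:ℤ) (s.gcd a) : ℤ) ∣ c)) : (Fse N K m a s c).card = 0 := by
  rw [Finset.card_eq_zero]
  by_contra hne
  obtain ⟨y, hy⟩ := Finset.nonempty_iff_ne_empty.mpr hne
  simp only [Fse, Finset.mem_filter] at hy
  obtain ⟨-, -, hdvd⟩ := hy
  set G : ℤ := (Int.gcd (m:ℤ) (s.gcd a) : ℤ)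
  have h1 : G ∣ (m:ℤ) := Int.gcd_dvd_left _ _
  have h2 : G ∣ s.gcd a := Int.gcd_dvd_right _ _
  have h3 : G ∣ ∑ k ∈ s, a k * y k :=
    Finset.dvd_sum fun k hk => Dvd.dvd.mul_right (h2.trans (Finset.gcd_dvd hk)) _
  have h4 : G ∣ c + ∑ k ∈ s, a k * y k := h1.trans hdvd
  have h5 : G ∣ c := by
    have := dvd_sub h4 h3
    simpa using this
  exact h h5


lemma Fse_empty_card {N : ℕ} (K m : ℕ) (a : Fin N → ℤ) (c : ℤ) :
    (Fse N K m a ∅ c).card ≤ 1 := by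
  apply Finset.card_le_one.mpr
  intro y hy z hz
  simp only [Fse, Finset.mem_filter] at hy hz
  funext k
  rw [hy.2.1 k (by simp), hz.2.1 k (by simp)]


lemma gcd_insert_eq {N : ℕ} (m : ℕ) (a : Fin N → ℤ) (s : Finset (Fin N)) (j : Fin N) :
    Int.gcd (m:ℤ) ((insert j s).gcd a) = Int.gcd (a j) ((Int.gcd (m:ℤ) (s.gcd a) : ℕ) : ℤ) := by
  rw [Finset.gcd_insert]
  have : ((Int.gcd (m:ℤ) (gcd (a j) (s.gcd a)) : ℕ) : ℤ)
      = ((Int.gcd (a j) ((Int.gcd (m:ℤ) (s.gcd a) : ℕ) : ℤ) : ℕ) : ℤ) := by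
    rw [Int.coe_gcd, Int.coe_gcd, Int.coe_gcd]
    rw [← gcd_assoc, gcd_comm (m:ℤ) (a j), gcd_assoc]
  exact_mod_cast this


lemma invariant {N : ℕ} (K m : ℕ) (hm : 0 < m) (hK : 0 < K) (a : Fin N → ℤ)
    (s : Finset (Fin N)) (c : ℤ) :
    ((Fse N K m a s c).card : ℝ) * m ≤
      (2*K+1:ℝ)^s.card * (Int.gcd (m:ℤ) (s.gcd a) : ℕ) +
        (if Int.gcd (m:ℤ) (s.gcd a) = m then 0 else (m:ℝ) * (2*K+1:ℝ)^(s.card - 1)) := by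
  induction s using Finset.induction generalizing c with
  | empty =>
    have h1 : Int.gcd (m:ℤ) ((∅ : Finset (Fin N)).gcd a) = m := by
      simp [Finset.gcd_empty]
    rw [h1, if_pos rfl]
    simp only [Finset.card_empty, pow_zero, one_mul, add_zero]
    have := Fse_empty_card (N := N) K m a c
    have hle : ((Fse N K m a ∅ c).card : ℝ) ≤ 1 := by exact_mod_cast this
    have := mul_le_mul_of_nonneg_right hle (by positivity : (0:ℝ) ≤ (m:ℝ))
    simpa using this
  | @insert j s hj IH =>
    set g' : ℕ := Int.gcd (m:ℤ) (s.gcd a) with hg'def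
    have hg'pos : 0 < g' := Int.gcd_pos_of_ne_zero_left _ (by exact_mod_cast hm.ne')
    have hgins : Int.gcd (m:ℤ) ((insert j s).gcd a) = Int.gcd (a j) ((g':ℕ):ℤ) :=
      gcd_insert_eq m a s j
    set g : ℕ := Int.gcd (a j) ((g':ℕ):ℤ) with hgdef
    have hgdvdg' : g ∣ g' := by
      have : ((g:ℕ):ℤ) ∣ ((g':ℕ):ℤ) := Int.gcd_dvd_right _ _
      exact_mod_cast this
    have hg'm : g' ∣ m := by
      have : ((g':ℕ):ℤ) ∣ ((m:ℕ):ℤ) := Int.gcd_dvd_left _ _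
      exact_mod_cast this
    have hgpos : 0 < g := Nat.pos_of_dvd_of_pos hgdvdg' hg'pos
    rw [hgins, Finset.card_insert_of_notMem hj, Nat.add_sub_cancel]
    -- sum decomposition
    have key := card_insert_sum K m a hj c
    have hzero : ∀ v ∈ (Finset.Icc (-(K:ℤ)) K).filter
        (fun v => ¬ ((g':ℤ) ∣ c + a j * v)), (Fse N K m a s (c + a j * v)).card = 0 := by
      intro v hv
      exact Fse_card_eq_zero K m a s _ (by
        rw [← hg'def]
        exact (Finset.mem_filter.mp hv).2)
    have hsum : (Fse N K m a (insert j s) c).card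
        = ∑ v ∈ (Finset.Icc (-(K:ℤ)) K).filter (fun v => (g':ℤ) ∣ c + a j * v),
            (Fse N K m a s (c + a j * v)).card := by
      rw [key, ← Finset.sum_filter_add_sum_filter_not (Finset.Icc (-(K:ℤ)) K)
        (fun v => (g':ℤ) ∣ c + a j * v)]
      rw [Finset.sum_eq_zero hzero, add_zero]
    set V : ℕ := ((Finset.Icc (-(K:ℤ)) K).filter (fun v => (g':ℤ) ∣ c + a j * v)).card with hVdef
    have hVb : V * g' ≤ 2*K*g + g' := div_count hg'pos (a j) c
    have hT2 : (2:ℝ) ≤ 2*(K:ℝ)+1 := by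
      have : (1:ℝ) ≤ (K:ℝ) := by exact_mod_cast hK
      linarith
    have hmain : ((Fse N K m a (insert j s) c).card : ℝ) * m
        ≤ (V:ℝ) * ((2*(K:ℝ)+1)^s.card * (g':ℝ)
            + (if g' = m then 0 else (m:ℝ) * (2*(K:ℝ)+1)^(s.card - 1))) := by
      rw [hsum]
      push_cast [Finset.sum_mul]
      have : ∀ v ∈ (Finset.Icc (-(K:ℤ)) K).filter (fun v => (g':ℤ) ∣ c + a j * v),
          ((Fse N K m a s (c + a j * v)).card : ℝ) * m
            ≤ (2*(K:ℝ)+1)^s.card * (g':ℝ)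
              + (if g' = m then 0 else (m:ℝ) * (2*(K:ℝ)+1)^(s.card - 1)) := by
        intro v _
        exact IH (c + a j * v)
      refine le_trans (Finset.sum_le_sum this) ?_
      rw [Finset.sum_const, nsmul_eq_mul]
    -- now case on g' = m
    have hVbR : (V:ℝ) * g' ≤ 2*(K:ℝ)*g + g' := by exact_mod_cast hVb
    by_cases hg'em : g' = m
    · rw [if_pos hg'em] at hmain
      have hVbm : (V:ℝ) * m ≤ 2*(K:ℝ)*g + m := by
        rw [hg'em] at hVbR; exact hVbR
      have hmain2 : ((Fse N K m a (insert j s) c).card : ℝ) * m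
          ≤ ((V:ℝ) * m) * (2*(K:ℝ)+1)^s.card := by
        refine hmain.trans (le_of_eq ?_)
        rw [hg'em]
        ring
      have hP : (0:ℝ) < (2*(K:ℝ)+1)^s.card := by positivity
      have hgR : (0:ℝ) ≤ (g:ℝ) := by positivity
      by_cases hgem : g = m
      · rw [if_pos hgem]
        have hgm : (g:ℝ) = m := by exact_mod_cast hgem
        refine hmain2.trans ?_
        rw [add_zero, pow_succ]
        nlinarith [mul_le_mul_of_nonneg_right hVbm hP.le,
          (show ((m:ℝ) - g) * (2*(K:ℝ)+1)^s.card = 0 by rw [hgm]; ring)]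
      · rw [if_neg hgem]
        refine hmain2.trans ?_
        rw [pow_succ]
        nlinarith [mul_le_mul_of_nonneg_right hVbm hP.le, mul_nonneg hgR hP.le]
    · -- g' proper divisor of m
      rw [if_neg hg'em] at hmain
      have hgem : g ≠ m := by
        intro h
        apply hg'em
        have h1 : m ∣ g' := h ▸ hgdvdg'
        exact Nat.dvd_antisymm hg'm h1
      rw [if_neg hgem]
      have h2g' : 2*g' ≤ m := by
        obtain ⟨q, hq⟩ := hg'm
        have hq0 : q ≠ 0 := by rintro rfl; simp at hq; omega
        have hq1 : q ≠ 1 := by rintro rfl; simp at hq; exact hg'em hq.symm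
        have h2q : 2 ≤ q := by omega
        calc 2*g' = g'*2 := by ring
          _ ≤ g'*q := Nat.mul_le_mul_left g' h2q
          _ = m := hq.symm
      -- n ≥ 1
      have hn1 : 1 ≤ s.card := by
        rcases Nat.eq_zero_or_pos s.card with h0 | h; swap; · exact h
        exfalso
        apply hg'em
        rw [Finset.card_eq_zero] at h0
        rw [h0] at hg'def
        simpa using hg'def
      obtain ⟨n', hn'⟩ : ∃ n', s.card = n' + 1 := ⟨s.card - 1, by omega⟩
      rw [hn'] at hmain ⊢
      rw [Nat.add_sub_cancel] at hmain
      set t : ℝ := (2*(K:ℝ)+1)^n' with htdef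
      have ht0 : (0:ℝ) < t := by positivity
      have hTT : (2*(K:ℝ)+1)^(n'+1) = t * (2*(K:ℝ)+1) := by rw [pow_succ]
      have hTT2 : (2*(K:ℝ)+1)^(n'+1+1) = t * (2*(K:ℝ)+1)^2 := by rw [pow_succ, pow_succ]; ring
      rw [hTT] at hmain
      rw [hTT2, hTT]
      -- target: V * (t*(2K+1)*g' + m*t) ≤ t*(2K+1)^2*g + m*(t*(2K+1))
      have hTm : ((2*(K:ℝ)+1) - 1)*m ≥ (g':ℝ)*(2*(K:ℝ)+1) := by
        have h2g'R : 2*(g':ℝ) ≤ (m:ℝ) := by exact_mod_cast h2g'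
        nlinarith [hT2, hg'pos, (show (0:ℝ) < g' by exact_mod_cast hg'pos)]
      have hgg'R : (g:ℝ) ≤ (g':ℝ) := by exact_mod_cast Nat.le_of_dvd hg'pos hgdvdg'
      have hg'R : (0:ℝ) < (g':ℝ) := by exact_mod_cast hg'pos
      have hfac : (0:ℝ) ≤ t * (2*(K:ℝ)+1) * (g':ℝ) + (m:ℝ) * t := by positivity
      have step1 : (V:ℝ) * (t * (2*(K:ℝ)+1) * (g':ℝ) + (m:ℝ) * t) * (g':ℝ)
          ≤ ((2*(K:ℝ))*g + g') * (t * (2*(K:ℝ)+1) * (g':ℝ) + (m:ℝ) * t) := by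
        have h := mul_le_mul_of_nonneg_right hVbR hfac
        have e : (V:ℝ) * (t * (2*(K:ℝ)+1) * (g':ℝ) + (m:ℝ) * t) * (g':ℝ)
            = (V:ℝ) * (g':ℝ) * (t * (2*(K:ℝ)+1) * (g':ℝ) + (m:ℝ) * t) := by ring
        rw [e]
        exact h
      have step2 : ((2*(K:ℝ))*g + g') * (t * (2*(K:ℝ)+1) * (g':ℝ) + (m:ℝ) * t)
          ≤ (t * (2*(K:ℝ)+1)^2 * (g:ℝ) + (m:ℝ) * (t * (2*(K:ℝ)+1))) * (g':ℝ) := by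
        have hprod : (0:ℝ) ≤ t * ((g':ℝ) - g) * (((2*(K:ℝ)+1) - 1)*m - (g':ℝ)*(2*(K:ℝ)+1)) := by
          apply mul_nonneg
          apply mul_nonneg ht0.le
          · linarith
          · linarith
        have expand : (t * (2*(K:ℝ)+1)^2 * (g:ℝ) + (m:ℝ) * (t * (2*(K:ℝ)+1))) * (g':ℝ)
            - ((2*(K:ℝ))*g + g') * (t * (2*(K:ℝ)+1) * (g':ℝ) + (m:ℝ) * t)
            = t * ((g':ℝ) - g) * (((2*(K:ℝ)+1) - 1)*m - (g':ℝ)*(2*(K:ℝ)+1)) := by ring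
        linarith [hprod, expand]
      have hcomb := le_trans step1 step2
      have := (mul_le_mul_iff_of_pos_right hg'R).mp hcomb
      calc ((Fse N K m a (insert j s) c).card : ℝ) * m
          ≤ (V:ℝ) * (t * (2*(K:ℝ)+1) * (g':ℝ) + (m:ℝ) * t) := by
            refine hmain.trans (le_of_eq ?_); ring
        _ ≤ t * (2*(K:ℝ)+1)^2 * (g:ℝ) + (m:ℝ) * (t * (2*(K:ℝ)+1)) := this


lemma reduce {N : ℕ} (K m : ℕ) (q : Fin N → ℤ) (j₀ : Fin N)
    (hq : (q j₀).natAbs = m) (hm : 0 < m) :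
    ((box N K).filter fun x => ∑ j, q j * x j = 0).card
      ≤ (Fse N K m q (Finset.univ.erase j₀) 0).card := by
  have hq0 : q j₀ ≠ 0 := by
    intro h; rw [h] at hq; simp at hq; omega
  have habs : ((m:ℕ):ℤ) = |q j₀| := by
    rw [← hq]; exact (Int.abs_eq_natAbs _).symm
  apply Finset.card_le_card_of_injOn (fun x => Function.update x j₀ 0)
  · intro x hx
    simp only [Finset.mem_coe, Finset.mem_filter] at hx ⊢
    obtain ⟨hbox, hzv⟩ := hx
    have hsplit : ∑ k ∈ Finset.univ.erase j₀, q k * x k + q j₀ * x j₀ = ∑ k, q k * x k :=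
      Finset.sum_erase_add _ _ (Finset.mem_univ j₀)
    have hsum0 : ∑ k ∈ Finset.univ.erase j₀, q k * x k = -(q j₀ * x j₀) := by
      rw [hzv] at hsplit; linarith
    simp only [Fse, Finset.mem_filter]
    refine ⟨?_, ?_, ?_⟩
    · rw [mem_box] at hbox ⊢
      intro k
      by_cases hk : k = j₀
      · subst hk; simp
      · rw [Function.update_of_ne hk]; exact hbox k
    · intro k hk
      have : k = j₀ := by
        by_contra hne
        exact hk (Finset.mem_erase.mpr ⟨hne, Finset.mem_univ k⟩)
      subst this; simp
    · have hsame : ∑ k ∈ Finset.univ.erase j₀, q k * (Function.update x j₀ 0) k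
          = ∑ k ∈ Finset.univ.erase j₀, q k * x k := by
        refine Finset.sum_congr rfl fun k hk => ?_
        rw [Function.update_of_ne (Finset.mem_erase.mp hk).1]
      rw [zero_add, hsame, hsum0]
      rw [dvd_neg, habs]
      exact (abs_dvd _ _).mpr (dvd_mul_right _ _)
  · intro x hx y hy heq
    rw [Finset.mem_coe, Finset.mem_filter] at hx hy
    have hk : ∀ k, k ≠ j₀ → x k = y k := by
      intro k hkj
      have h' : Function.update x j₀ 0 k = Function.update y j₀ 0 k := congrFun heq k
      rwa [Function.update_of_ne hkj, Function.update_of_ne hkj] at h'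
    have hex : ∑ k ∈ Finset.univ.erase j₀, q k * x k
        = ∑ k ∈ Finset.univ.erase j₀, q k * y k := by
      refine Finset.sum_congr rfl fun k hkk => ?_
      rw [hk k (Finset.mem_erase.mp hkk).1]
    have hsplitx : ∑ k ∈ Finset.univ.erase j₀, q k * x k + q j₀ * x j₀ = ∑ k, q k * x k :=
      Finset.sum_erase_add _ _ (Finset.mem_univ j₀)
    have hsplity : ∑ k ∈ Finset.univ.erase j₀, q k * y k + q j₀ * y j₀ = ∑ k, q k * y k :=
      Finset.sum_erase_add _ _ (Finset.mem_univ j₀)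
    have : q j₀ * x j₀ = q j₀ * y j₀ := by
      rw [hx.2] at hsplitx; rw [hy.2] at hsplity
      linarith [hex]
    have hxy : x j₀ = y j₀ := mul_left_cancel₀ hq0 this
    funext k
    by_cases hkj : k = j₀
    · subst hkj; exact hxy
    · exact hk k hkj


lemma gcd_erase_one {N : ℕ} (q : Fin N → ℤ) (j₀ : Fin N) (m : ℕ)
    (hq : (q j₀).natAbs = m) (hgcd : Finset.univ.gcd q = 1) :
    Int.gcd (m:ℤ) ((Finset.univ.erase j₀).gcd q) = 1 := by
  have h1 : insert j₀ (Finset.univ.erase j₀) = (Finset.univ : Finset (Fin N)) :=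
    Finset.insert_erase (Finset.mem_univ _)
  have h2 : gcd (q j₀) ((Finset.univ.erase j₀).gcd q) = 1 := by
    rw [← Finset.gcd_insert, h1, hgcd]
  have h3 : Int.gcd (q j₀) ((Finset.univ.erase j₀).gcd q) = 1 := by
    have := Int.coe_gcd (q j₀) ((Finset.univ.erase j₀).gcd q)
    rw [h2] at this
    exact_mod_cast this
  rw [← h3, ← hq]
  unfold Int.gcd
  simp [Int.natAbs_abs]

end S15

theorem stmt_15 (N M : ℕ) (hN : 2 ≤ N) (L : Fin M → Fin N → ℤ)
    (hL : ∀ i, L i ≠ 0) (hgcd : ∀ i, Finset.univ.gcd (L i) = 1) :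
    ∃ x : Fin N → ℤ, (∀ i, ∑ j, L i j * x j ≠ 0) ∧
      ∀ j, (|x j| : ℝ) ≤
        (∑ i, 1 / ((Finset.univ.sup fun j => (L i j).natAbs : ℕ) : ℝ)) +
          Real.sqrt M := by
  open Finset S15 in
  rcases Nat.eq_zero_or_pos M with rfl | hM
  · refine ⟨0, fun i => i.elim0, fun j => ?_⟩
    simp
  · set H : Fin M → ℕ := fun i => Finset.univ.sup fun j => (L i j).natAbs with hHdef
    have hH1 : ∀ i, 1 ≤ H i := by
      intro i
      obtain ⟨j, hj⟩ := Function.ne_iff.mp (hL i)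
      have hj' : L i j ≠ 0 := by simpa using hj
      calc 1 ≤ (L i j).natAbs := Int.natAbs_pos.mpr hj'
        _ ≤ H i := Finset.le_sup (f := fun j => (L i j).natAbs) (Finset.mem_univ j)
    have hHpos : ∀ i, (0:ℝ) < (H i : ℝ) := fun i => by exact_mod_cast hH1 i
    set S : ℝ := ∑ i, 1 / (H i : ℝ) with hSdef
    have hS0 : 0 < S := by
      rw [hSdef]
      apply Finset.sum_pos (fun i _ => by have := hHpos i; positivity)
      exact Finset.univ_nonempty_iff.mpr ⟨⟨0, hM⟩⟩
    have hM1 : (1:ℝ) ≤ Real.sqrt M := by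
      rw [show (1:ℝ) = Real.sqrt 1 by rw [Real.sqrt_one]]
      exact Real.sqrt_le_sqrt (by exact_mod_cast hM)
    set B : ℝ := S + Real.sqrt M with hBdef
    have hB1 : 1 < B := by rw [hBdef]; linarith
    set K : ℕ := ⌊B⌋₊ with hKdef
    have hK1 : 1 ≤ K := by
      rw [hKdef]
      exact Nat.le_floor (by push_cast; linarith)
    have hKB : (K:ℝ) ≤ B := Nat.floor_le (by linarith)
    have hBK : B < (K:ℝ) + 1 := Nat.lt_floor_add_one B
    have hTB : B < 2*(K:ℝ)+1 := by linarith
    -- per-form counting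
    have hkey : ∀ i : Fin M, ((((box N K).filter fun x => ∑ j, L i j * x j = 0).card : ℝ))
        ≤ (2*(K:ℝ)+1)^(N-1) * (1/(H i : ℝ)) + (2*(K:ℝ)+1)^(N-2) := by
      intro i
      have hne : (Finset.univ : Finset (Fin N)).Nonempty :=
        Finset.univ_nonempty_iff.mpr ⟨⟨0, by omega⟩⟩
      obtain ⟨j₀, -, hj₀⟩ := Finset.exists_mem_eq_sup Finset.univ hne
        (fun j => (L i j).natAbs)
      have hj₀' : (L i j₀).natAbs = H i := by rw [hHdef]; exact hj₀.symm
      have hred := reduce K (H i) (L i) j₀ hj₀' (hH1 i)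
      have hg1 := gcd_erase_one (L i) j₀ (H i) hj₀' (hgcd i)
      have hinv := invariant K (H i) (hH1 i) hK1 (L i) (Finset.univ.erase j₀) 0
      rw [hg1] at hinv
      have hce : (Finset.univ.erase j₀).card = N - 1 := by
        rw [Finset.card_erase_of_mem (Finset.mem_univ _), Finset.card_univ, Fintype.card_fin]
      have e12 : N - 1 - 1 = N - 2 := Nat.sub_sub N 1 1
      rw [hce, e12] at hinv
      have hinv2 : ((Fse N K (H i) (L i) (Finset.univ.erase j₀) 0).card : ℝ) * (H i)
          ≤ (2*(K:ℝ)+1)^(N-1) + (H i : ℝ) * (2*(K:ℝ)+1)^(N-2) := by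
        refine hinv.trans ?_
        have hx : (0:ℝ) ≤ (H i : ℝ) * (2*(K:ℝ)+1)^(N-2) := by positivity
        have hy : (0:ℝ) ≤ (2*(K:ℝ)+1)^(N-1) := by positivity
        split_ifs <;> simp <;> linarith
      rw [← mul_le_mul_iff_of_pos_right (hHpos i)]
      have hRHS : ((2*(K:ℝ)+1)^(N-1) * (1/(H i : ℝ)) + (2*(K:ℝ)+1)^(N-2)) * (H i : ℝ)
          = (2*(K:ℝ)+1)^(N-1) + (H i : ℝ) * (2*(K:ℝ)+1)^(N-2) := by
        have hh : (H i : ℝ) ≠ 0 := ne_of_gt (hHpos i)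
        rw [add_mul, mul_assoc, one_div, inv_mul_cancel₀ hh, mul_one,
          mul_comm ((2*(K:ℝ)+1)^(N-2)) ((H i : ℝ))]
      rw [hRHS]
      refine le_trans ?_ hinv2
      have : ((((box N K).filter fun x => ∑ j, L i j * x j = 0).card : ℝ))
          ≤ ((Fse N K (H i) (L i) (Finset.univ.erase j₀) 0).card : ℝ) := by
        exact_mod_cast hred
      exact mul_le_mul_of_nonneg_right this (by positivity)
    -- numerics
    obtain ⟨n₂, hn₂⟩ : ∃ n₂, N = n₂ + 2 := ⟨N - 2, by omega⟩
    have hnum : (2*(K:ℝ)+1) * S + (M:ℝ) < (2*(K:ℝ)+1)^2 := by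
      have hsqM : Real.sqrt M * Real.sqrt M = (M:ℝ) :=
        Real.mul_self_sqrt (by positivity)
      nlinarith [hTB, hS0, hM1, hsqM, hKB,
        mul_le_mul_of_nonneg_right hTB.le (Real.sqrt_nonneg (M:ℝ)),
        mul_le_mul_of_nonneg_right hTB.le hS0.le]
    have hsum1 : (∑ i, ((((box N K).filter fun x => ∑ j, L i j * x j = 0).card : ℝ)))
        ≤ (2*(K:ℝ)+1)^(N-1) * S + (M:ℝ) * (2*(K:ℝ)+1)^(N-2) := by
      refine le_trans (Finset.sum_le_sum fun i _ => hkey i) ?_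
      rw [Finset.sum_add_distrib, ← Finset.mul_sum, Finset.sum_const, Finset.card_univ,
        Fintype.card_fin, nsmul_eq_mul, hSdef]
    have hsum2 : (2*(K:ℝ)+1)^(N-1) * S + (M:ℝ) * (2*(K:ℝ)+1)^(N-2) < (2*(K:ℝ)+1)^N := by
      have e1 : N - 1 = n₂ + 1 := by omega
      have e2 : N - 2 = n₂ := by omega
      rw [e1, e2, hn₂]
      have hP : (0:ℝ) < (2*(K:ℝ)+1)^n₂ := by positivity
      calc (2*(K:ℝ)+1)^(n₂+1) * S + (M:ℝ) * (2*(K:ℝ)+1)^n₂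
          = (2*(K:ℝ)+1)^n₂ * ((2*(K:ℝ)+1) * S + (M:ℝ)) := by ring
        _ < (2*(K:ℝ)+1)^n₂ * ((2*(K:ℝ)+1)^2) := by
            exact mul_lt_mul_of_pos_left hnum hP
        _ = (2*(K:ℝ)+1)^(n₂+2) := by ring
    have hcardlt : (∑ i, (((box N K).filter fun x => ∑ j, L i j * x j = 0).card)) < (2*K+1)^N := by
      have : ((∑ i, (((box N K).filter fun x => ∑ j, L i j * x j = 0).card) : ℕ) : ℝ)
          < (((2*K+1)^N : ℕ) : ℝ) := by
        push_cast
        exact lt_of_le_of_lt hsum1 hsum2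
      exact_mod_cast this
    have hex : ∃ x ∈ box N K, ∀ i, ∑ j, L i j * x j ≠ 0 := by
      by_contra hcon
      push_neg at hcon
      have hsub : box N K ⊆ Finset.univ.biUnion
          (fun i => (box N K).filter fun x => ∑ j, L i j * x j = 0) := by
        intro x hx
        obtain ⟨i, hi⟩ := hcon x hx
        exact Finset.mem_biUnion.mpr ⟨i, Finset.mem_univ _, Finset.mem_filter.mpr ⟨hx, hi⟩⟩
      have h1 := Finset.card_le_card hsub
      have h2 := Finset.card_biUnion_le (s := (Finset.univ : Finset (Fin M)))
        (t := fun i => (box N K).filter fun x => ∑ j, L i j * x j = 0)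
      rw [card_box] at h1
      exact lt_irrefl _ (lt_of_le_of_lt (h1.trans h2) hcardlt)
    obtain ⟨x, hxb, hxg⟩ := hex
    refine ⟨x, hxg, fun j => ?_⟩
    have hj := Finset.mem_Icc.mp (mem_box.mp hxb j)
    have habs : |x j| ≤ (K:ℤ) := abs_le.mpr hj
    have h2 : ((|x j| : ℤ) : ℝ) ≤ (K:ℝ) := by exact_mod_cast habs
    have hfin : ((|x j| : ℤ) : ℝ) ≤ B := le_trans h2 hKB
    rw [hBdef, hSdef] at hfin
    simp only [hHdef] at hfin
    rw [show |((x j : ℤ) : ℝ)| = ((|x j| : ℤ) : ℝ) from Int.cast_abs.symm]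
    exact hfin
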